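/- Let λ ∈ ∂𝔻 be an irrational rotation, let φ ∈ H^∞(𝔻), and let T = R_λ φ(B) on H²(𝔻). Suppose there exists a sequence (n_k) of positive integers such that the sets C₀ = {z ∈ 𝔻 : Ψ_{n_k}(z) → 0} and C₁ = {z ∈ 𝔻 : Ω_{n_k}(z) → ∞} both have an accumulation point in 𝔻. Then T is hypercyclic on H²(𝔻). -/

import Mathlib

open Complex Metric Filter Topology ComplexConjugate
open scoped ENNReal NNReal

noncomputable section

/-- The Hardy space `H²(𝔻)`, modeled via Taylor coefficients as the sequence space `ℓ²`:
an analytic function `f(z) = Σ aₙ zⁿ` on the unit disk with `Σ |aₙ|² < ∞` is identified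
with its coefficient sequence. -/
abbrev H2 := lp (fun _ : ℕ => ℂ) 2

/-- The analytic function on the unit disk represented by an element of `H²`. -/
def H2.toFun (f : H2) (z : ℂ) : ℂ := ∑' n : ℕ, f n * z ^ n

/-- `B` is the backward shift `(Bf)(z) = (f(z) - f(0))/z`, i.e. on Taylor coefficients
`(Bf)ₙ = f_{n+1}`. -/
def IsBackwardShift (B : H2 →L[ℂ] H2) : Prop :=
  ∀ (f : H2) (n : ℕ), B f n = f (n + 1)

/-- `R` is the dilation operator `(R_λ f)(z) = f(λ z)`, i.e. on Taylor coefficients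
`(R_λ f)ₙ = λⁿ fₙ`. -/
def IsDilation (lam : ℂ) (R : H2 →L[ℂ] H2) : Prop :=
  ∀ (f : H2) (n : ℕ), R f n = lam ^ n * f n

/-- `φ ∈ H^∞(𝔻)`: a bounded analytic function on the open unit disk. -/
def InHinf (φ : ℂ → ℂ) : Prop :=
  DifferentiableOn ℂ φ (ball (0:ℂ) 1) ∧ ∃ M : ℝ, ∀ z ∈ ball (0:ℂ) 1, ‖φ z‖ ≤ M

/-- `Φ = φ(B)`, the coanalytic Toeplitz operator `M_{φ̄}⋆` with symbol `φ`: there is a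
Taylor coefficient sequence `c` for `φ` on the disk such that
`(Φ f)ₙ = Σ_k c_k f_{n+k}` (equivalently `Φ = Σ_k c_k B^k`). -/
def IsCoToeplitz (φ : ℂ → ℂ) (Φ : H2 →L[ℂ] H2) : Prop :=
  ∃ c : ℕ → ℂ,
    (∀ z ∈ ball (0:ℂ) 1, HasSum (fun k => c k * z ^ k) (φ z)) ∧
    (∀ (f : H2) (n : ℕ), HasSum (fun k => c k * f (n + k)) (Φ f n))

/-- An operator `T` is hypercyclic if some vector has dense orbit `{Tⁿ x : n ∈ ℕ}`. -/
def Hypercyclic (T : H2 →L[ℂ] H2) : Prop :=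
  ∃ x : H2, Dense (Set.range fun n : ℕ => (T ^ n) x)

/-- An operator `T` is supercyclic if for some vector `x` the set of scalar multiples
`{μ Tⁿ x : μ ∈ ℂ, n ∈ ℕ}` is dense. -/
def Supercyclic (T : H2 →L[ℂ] H2) : Prop :=
  ∃ x : H2, Dense {y : H2 | ∃ (μ : ℂ) (n : ℕ), y = μ • (T ^ n) x}

/-- `φ̄(z) = conj (φ (conj z))`. -/
def conjSymb (φ : ℂ → ℂ) (z : ℂ) : ℂ := conj (φ (conj z))

/-- `λ` is an irrational rotation: `|λ| = 1` and `λ` is not a root of unity. -/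
def IsIrrationalRotation (lam : ℂ) : Prop :=
  ‖lam‖ = 1 ∧ ∀ n : ℕ, 0 < n → lam ^ n ≠ 1

/-- `Ψ_n(z) = φ̄(z)·φ̄(αz)⋯φ̄(α^{n-1}z)` where `α = conj λ`. -/
def psiProd (φ : ℂ → ℂ) (lam : ℂ) (n : ℕ) (z : ℂ) : ℂ :=
  ∏ j ∈ Finset.range n, conjSymb φ ((conj lam) ^ j * z)

/-- `Ω_n(z) = φ̄(ωz)·φ̄(ω²z)⋯φ̄(ωⁿz)` where `ω = 1/conj λ`. -/
def omegaProd (φ : ℂ → ℂ) (lam : ℂ) (n : ℕ) (z : ℂ) : ℂ :=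
  ∏ j ∈ Finset.range n, conjSymb φ (((conj lam)⁻¹) ^ (j + 1) * z)

lemma memℓp_geom {a : ℂ} (ha : ‖a‖ < 1) : Memℓp (fun n : ℕ => (conj a) ^ n) 2 := by
  apply memℓp_gen
  have hs : Summable fun n : ℕ => (‖a‖ ^ 2) ^ n :=
    summable_geometric_of_lt_one (by positivity) (by nlinarith [norm_nonneg a])
  refine hs.congr fun n => ?_
  rw [norm_pow]
  simp only [RCLike.norm_conj]
  rw [ENNReal.toReal_ofNat, Real.rpow_two]
  ring

/-- The reproducing kernel `k_a(z) = 1/(1 - conj(a) z) = Σ (conj a)ⁿ zⁿ` of `H²(𝔻)`,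
as an element of `H²` (junk value `0` if `a` is outside the unit disk). -/
def kernelVec (a : ℂ) : H2 :=
  if ha : ‖a‖ < 1 then ⟨fun n => (conj a) ^ n, memℓp_geom ha⟩ else 0

/-- `T` satisfies the Hypercyclicity Criterion for the sequence `(n_k)`. -/
def SatisfiesHCCriterion (T : H2 →L[ℂ] H2) (nk : ℕ → ℕ) : Prop :=
  ∃ (X₀ Y₀ : Set H2) (S : ℕ → H2 → H2),
    Dense X₀ ∧ Dense Y₀ ∧
    (∀ x ∈ X₀, Tendsto (fun k => (T ^ nk k) x) atTop (𝓝 0)) ∧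
    (∀ y ∈ Y₀, Tendsto (fun k => S k y) atTop (𝓝 0)) ∧
    (∀ y ∈ Y₀, Tendsto (fun k => (T ^ nk k) (S k y)) atTop (𝓝 y))

/-- A family `F` of functions is normal at `z₀`: on some open neighborhood of `z₀`,
every (sub)sequence of the family has a locally uniformly convergent subsequence. -/
def NormalAt (F : ℕ → ℂ → ℂ) (z₀ : ℂ) : Prop :=
  ∃ U : Set ℂ, IsOpen U ∧ z₀ ∈ U ∧
    ∀ g : ℕ → ℕ, StrictMono g →
      ∃ (h : ℕ → ℕ) (f : ℂ → ℂ), StrictMono h ∧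
        TendstoLocallyUniformlyOn (fun j => F (g (h j))) f atTop U

/-- The family `{F n : n ≥ 1}` is uniformly bounded on compact subsets of the unit disk. -/
def UnifBddOnCompacts (F : ℕ → ℂ → ℂ) : Prop :=
  ∀ K : Set ℂ, K ⊆ ball (0:ℂ) 1 → IsCompact K →
    ∃ M : ℝ, ∀ n : ℕ, 1 ≤ n → ∀ z ∈ K, ‖F n z‖ ≤ M


-- ============ new stuff ============

set_option synthInstance.maxHeartbeats 1000000 in
instance : TopologicalSpace.SeparableSpace H2 := by
  have b : HilbertBasis ℕ ℂ H2 := default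
  have h1 : TopologicalSpace.IsSeparable (Submodule.span ℂ (Set.range b) : Set H2) :=
    (Set.countable_range b).isSeparable.span
  have h2 := h1.closure
  rw [← Submodule.topologicalClosure_coe, b.dense_span] at h2
  have : TopologicalSpace.IsSeparable (Set.univ : Set H2) := by simpa using h2
  exact TopologicalSpace.isSeparable_univ_iff.mp this

set_option synthInstance.maxHeartbeats 1000000 in
lemma kernelVec_apply {a : ℂ} (ha : ‖a‖ < 1) (n : ℕ) :
    kernelVec a n = (conj a) ^ n := by
  simp only [kernelVec, dif_pos ha]

lemma norm_lt_conj {a : ℂ} (ha : ‖a‖ < 1) : ‖(conj a : ℂ)‖ < 1 := by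
  simpa using ha

lemma Phi_kernelVec {φ : ℂ → ℂ} {Φ : H2 →L[ℂ] H2} (hΦ : IsCoToeplitz φ Φ)
    {a : ℂ} (ha : ‖a‖ < 1) :
    Φ (kernelVec a) = (conj (conjSymb φ a)) • kernelVec a := by
  obtain ⟨c, hc, hsum⟩ := hΦ
  apply lp.ext; funext n
  have h2 : HasSum (fun k => c k * (conj a) ^ k) (φ (conj a)) :=
    hc _ (by simpa [mem_ball, dist_eq_norm] using norm_lt_conj ha)
  have h3 : HasSum (fun k => c k * kernelVec a (n + k)) ((conj a) ^ n * φ (conj a)) := by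
    have h4 := h2.mul_left ((conj a) ^ n)
    have : (fun k => c k * kernelVec a (n + k)) =
        fun k => (conj a) ^ n * (c k * (conj a) ^ k) := by
      funext k; rw [kernelVec_apply ha, pow_add]; ring
    rw [this]; exact h4
  have h1 := (hsum (kernelVec a) n).unique h3
  rw [h1, lp.coeFn_smul, Pi.smul_apply, kernelVec_apply ha, conjSymb,
    Complex.conj_conj, smul_eq_mul, mul_comm]

lemma norm_mul_mem {lam a : ℂ} (hl : ‖lam‖ = 1) (ha : ‖a‖ < 1) : ‖conj lam * a‖ < 1 := by
  rw [norm_mul, RCLike.norm_conj, hl, one_mul]; exact ha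

lemma T_kernelVec {lam : ℂ} (hl : ‖lam‖ = 1) {φ : ℂ → ℂ}
    {R Φ T : H2 →L[ℂ] H2} (hR : IsDilation lam R) (hΦ : IsCoToeplitz φ Φ)
    (hT : T = R ∘L Φ) {a : ℂ} (ha : ‖a‖ < 1) :
    T (kernelVec a) = (conj (conjSymb φ a)) • kernelVec (conj lam * a) := by
  rw [hT, ContinuousLinearMap.comp_apply, Phi_kernelVec hΦ ha, map_smul]
  congr 1
  apply lp.ext; funext n
  rw [hR (kernelVec a) n, kernelVec_apply ha, kernelVec_apply (norm_mul_mem hl ha),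
    map_mul, Complex.conj_conj, mul_pow]

lemma Tpow_kernelVec {lam : ℂ} (hl : ‖lam‖ = 1) {φ : ℂ → ℂ}
    {R Φ T : H2 →L[ℂ] H2} (hR : IsDilation lam R) (hΦ : IsCoToeplitz φ Φ)
    (hT : T = R ∘L Φ) (n : ℕ) {a : ℂ} (ha : ‖a‖ < 1) :
    (T ^ n) (kernelVec a) =
      (conj (psiProd φ lam n a)) • kernelVec ((conj lam) ^ n * a) := by
  induction n generalizing a with
  | zero => simp [psiProd]
  | succ n ih =>
    have hmem : ‖conj lam * a‖ < 1 := norm_mul_mem hl ha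
    rw [pow_succ, ContinuousLinearMap.mul_apply, T_kernelVec hl hR hΦ hT ha, map_smul,
      ih hmem, smul_smul, ← map_mul]
    have h1 : psiProd φ lam (n + 1) a = conjSymb φ a * psiProd φ lam n (conj lam * a) := by
      rw [psiProd, Finset.prod_range_succ']
      rw [mul_comm]
      congr 1
      · simp
      · rw [psiProd]
        apply Finset.prod_congr rfl
        intro j _
        congr 1
        rw [pow_succ]
        ring
    have h2 : (conj lam) ^ (n + 1) * a = (conj lam) ^ n * (conj lam * a) := by
      rw [pow_succ]; ring
    rw [h1, h2]

lemma kernelVec_norm_eq {a b : ℂ} (hab : ‖a‖ = ‖b‖) (ha : ‖a‖ < 1) :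
    ‖kernelVec a‖ = ‖kernelVec b‖ := by
  have hb : ‖b‖ < 1 := hab ▸ ha
  rw [lp.norm_eq_tsum_rpow (p := 2) (by norm_num) (kernelVec a),
    lp.norm_eq_tsum_rpow (p := 2) (by norm_num) (kernelVec b)]
  congr 1
  apply tsum_congr
  intro n
  rw [kernelVec_apply ha, kernelVec_apply hb]
  rw [norm_pow, norm_pow, RCLike.norm_conj, RCLike.norm_conj, hab]

lemma dense_span_kernelVec {A : Set ℂ} (hA : A ⊆ ball (0:ℂ) 1) {p : ℂ}
    (hp : p ∈ ball (0:ℂ) 1) (hacc : AccPt p (Filter.principal A)) :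
    Dense (Submodule.span ℂ (kernelVec '' A) : Set H2) := by
  set K := Submodule.span ℂ (kernelVec '' A) with hK
  rw [Submodule.dense_iff_topologicalClosure_eq_top,
    ← Submodule.orthogonal_orthogonal_eq_closure]
  suffices h : Kᗮ = ⊥ by rw [h, Submodule.bot_orthogonal_eq_top]
  rw [Submodule.eq_bot_iff]
  intro f hf
  set pser : FormalMultilinearSeries ℂ ℂ ℂ :=
    fun n => ContinuousMultilinearMap.mkPiRing ℂ (Fin n) (f n) with hpser
  set F : ℂ → ℂ := fun z => ∑' n : ℕ, f n * z ^ n with hFdef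
  have hsummable : ∀ z : ℂ, ‖z‖ < 1 → Summable (fun n : ℕ => f n * z ^ n) := by
    intro z hz
    apply Summable.of_norm_bounded (g := fun n => ‖f‖ * ‖z‖ ^ n)
      ((summable_geometric_of_lt_one (norm_nonneg z) hz).mul_left ‖f‖)
    intro n
    rw [norm_mul, norm_pow]
    exact mul_le_mul_of_nonneg_right (lp.norm_apply_le_norm two_ne_zero f n) (by positivity)
  have hball : HasFPowerSeriesOnBall F pser 0 1 := by
    refine ⟨?_, one_pos, ?_⟩
    · apply ENNReal.le_of_forall_nnreal_lt
      intro r hr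
      apply pser.le_radius_of_bound ‖f‖
      intro n
      have h1 : ‖pser n‖ = ‖f n‖ := ContinuousMultilinearMap.norm_mkPiRing (f n)
      rw [h1]
      calc ‖f n‖ * (r:ℝ) ^ n ≤ ‖f‖ * 1 ^ n := by
            apply mul_le_mul (lp.norm_apply_le_norm two_ne_zero f n)
              (pow_le_pow_left₀ (by positivity) (le_of_lt (by exact_mod_cast hr)) n)
              (by positivity) (norm_nonneg _)
        _ = ‖f‖ := by rw [one_pow, mul_one]
    · intro y hy
      rw [EMetric.mem_ball, edist_zero_right] at hy
      have hy' : ‖y‖ < 1 := by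
        have h2 : (‖y‖₊ : ℝ≥0∞) < ((1:ℝ≥0) : ℝ≥0∞) := by rw [ENNReal.coe_one]; exact hy
        exact_mod_cast h2
      have heq : ∀ n : ℕ, (pser n fun _ => y) = f n * y ^ n := by
        intro n
        simp only [hpser, ContinuousMultilinearMap.mkPiRing_apply, Finset.prod_const,
          Finset.card_univ, Fintype.card_fin, smul_eq_mul]
        ring
      rw [zero_add, show (fun n : ℕ => pser n fun _ => y) = fun n : ℕ => f n * y ^ n from
        funext heq]
      exact (hsummable y hy').hasSum
  have hzero : ∀ a ∈ A, F a = 0 := by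
    intro a haA
    have ha : ‖a‖ < 1 := mem_ball_zero_iff.mp (hA haA)
    have hmem : kernelVec a ∈ K := Submodule.subset_span ⟨a, haA, rfl⟩
    have hinner : (inner ℂ (kernelVec a) f : ℂ) = 0 :=
      (Submodule.mem_orthogonal K f).mp hf _ hmem
    rw [lp.inner_eq_tsum] at hinner
    rw [hFdef]
    rw [← hinner]
    apply tsum_congr
    intro n
    rw [kernelVec_apply ha, RCLike.inner_apply, map_pow, Complex.conj_conj, mul_comm]
  have hEM : Metric.eball (0:ℂ) 1 = ball (0:ℂ) 1 := by
    have : (1:ℝ≥0∞) = ((1:ℝ≥0):ℝ≥0∞) := by simp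
    rw [this, Metric.emetric_ball_nnreal]
    norm_num
  have hFanalytic : AnalyticOnNhd ℂ F (ball (0:ℂ) 1) := hEM ▸ hball.analyticOnNhd
  have hprec : IsPreconnected (ball (0:ℂ) 1) := (convex_ball (0:ℂ) 1).isPreconnected
  have hfreq : ∃ᶠ z in 𝓝[≠] p, F z = 0 := by
    have h1 := (accPt_iff_frequently (x := p) (C := A)).mp hacc
    rw [frequently_nhdsWithin_iff]
    exact h1.mono fun z hz => ⟨hzero z hz.2, hz.1⟩
  have hFzero : Set.EqOn F 0 (ball (0:ℂ) 1) :=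
    hFanalytic.eqOn_zero_of_preconnected_of_frequently_eq_zero hprec hp hfreq
  have hat : HasFPowerSeriesAt 0 pser 0 := by
    apply hball.hasFPowerSeriesAt.congr
    filter_upwards [(isOpen_ball).mem_nhds (by simp : (0:ℂ) ∈ ball (0:ℂ) 1)] with z hz
    exact hFzero hz
  apply lp.ext
  funext n
  have h0 := hat.apply_eq_zero n 1
  rw [hpser, ContinuousMultilinearMap.mkPiRing_apply] at h0
  simp only [Finset.prod_const, one_pow, smul_eq_mul, one_mul] at h0
  simpa using h0

lemma hypercyclic_of_transitive {T : H2 →L[ℂ] H2}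
    (h : ∀ U V : Set H2, IsOpen U → IsOpen V → U.Nonempty → V.Nonempty →
      ∃ n : ℕ, ∃ u ∈ U, (T ^ n) u ∈ V) : Hypercyclic T := by
  obtain ⟨b, hbc, hbne, hbasis⟩ := TopologicalSpace.exists_countable_basis H2
  haveI hcnt : Countable b := hbc.to_subtype
  set G : b → Set H2 := fun s => ⋃ n : ℕ, (fun x => (T ^ n) x) ⁻¹' (s : Set H2) with hG
  have hopen : ∀ s, IsOpen (G s) := fun s =>
    isOpen_iUnion fun n => (hbasis.isOpen s.2).preimage (T ^ n).continuous
  have hdense : ∀ s, Dense (G s) := by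
    intro s
    rw [dense_iff_inter_open]
    intro U hU hUne
    have hsne : (s : Set H2).Nonempty := by
      rw [Set.nonempty_iff_ne_empty]
      intro hcon
      exact hbne (hcon ▸ s.2)
    obtain ⟨n, u, hu, hTu⟩ := h U s hU (hbasis.isOpen s.2) hUne hsne
    exact ⟨u, hu, Set.mem_iUnion.mpr ⟨n, hTu⟩⟩
  have hD : Dense (⋂ s, G s) := dense_iInter_of_isOpen hopen hdense
  obtain ⟨x, hx⟩ := hD.nonempty
  refine ⟨x, ?_⟩
  rw [dense_iff_inter_open]
  rintro U hU ⟨y, hy⟩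
  obtain ⟨s, hsb, hys, hsU⟩ := hbasis.exists_subset_of_mem_open hy hU
  have hxG := Set.mem_iInter.mp hx ⟨s, hsb⟩
  obtain ⟨n, hn⟩ := Set.mem_iUnion.mp hxG
  exact ⟨(T ^ n) x, hsU hn, ⟨n, rfl⟩⟩

lemma psi_omega {φ : ℂ → ℂ} {lam : ℂ} (hcl0 : (conj lam : ℂ) ≠ 0) (n : ℕ) (b : ℂ) :
    psiProd φ lam n (((conj lam)⁻¹) ^ n * b) = omegaProd φ lam n b := by
  have key : ∀ m : ℕ, m ≤ n → (conj lam) ^ m * ((conj lam)⁻¹ ^ n * b) =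
      (conj lam)⁻¹ ^ (n - m) * b := by
    intro m hm
    have hnm : (n - m) + m = n := by omega
    calc (conj lam) ^ m * ((conj lam)⁻¹ ^ n * b)
        = (conj lam) ^ m * (((conj lam)⁻¹ ^ (n - m) * (conj lam)⁻¹ ^ m) * b) := by
          rw [← pow_add, hnm]
      _ = ((conj lam) ^ m * (conj lam)⁻¹ ^ m) * ((conj lam)⁻¹ ^ (n - m) * b) := by ring
      _ = (conj lam)⁻¹ ^ (n - m) * b := by
          rw [← mul_pow, mul_inv_cancel₀ hcl0, one_pow, one_mul]
  rw [psiProd, omegaProd, ← Finset.prod_range_reflect]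
  apply Finset.prod_congr rfl
  intro j hj
  rw [Finset.mem_range] at hj
  congr 1
  rw [key (n - 1 - j) (by omega)]
  have h1 : n - (n - 1 - j) = j + 1 := by omega
  rw [h1]

lemma cancel_omega {lam : ℂ} (hcl0 : (conj lam : ℂ) ≠ 0) (n : ℕ) (b : ℂ) :
    (conj lam) ^ n * (((conj lam)⁻¹) ^ n * b) = b := by
  rw [← mul_assoc, ← mul_pow, mul_inv_cancel₀ hcl0, one_pow, one_mul]

lemma tendsto_zero_of_span {lam : ℂ} (hl : ‖lam‖ = 1) {φ : ℂ → ℂ}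
    {R Φ T : H2 →L[ℂ] H2} (hR : IsDilation lam R) (hΦ : IsCoToeplitz φ Φ)
    (hT : T = R ∘L Φ) {nk : ℕ → ℕ}
    {A : Set ℂ} (hA : ∀ a ∈ A, ‖a‖ < 1 ∧
      Tendsto (fun k => psiProd φ lam (nk k) a) atTop (𝓝 0))
    {x : H2} (hx : x ∈ Submodule.span ℂ (kernelVec '' A)) :
    Tendsto (fun k => (T ^ nk k) x) atTop (𝓝 0) := by
  induction hx using Submodule.span_induction with
  | mem v hv =>
    obtain ⟨a, haA, rfl⟩ := hv
    obtain ⟨ha, hΨ⟩ := hA a haA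
    rw [tendsto_zero_iff_norm_tendsto_zero]
    have hab : ∀ m : ℕ, ‖(conj lam : ℂ) ^ m * a‖ = ‖a‖ := by
      intro m
      rw [norm_mul, norm_pow, RCLike.norm_conj, hl, one_pow, one_mul]
    have heq : ∀ k, ‖(T ^ nk k) (kernelVec a)‖ =
        ‖psiProd φ lam (nk k) a‖ * ‖kernelVec a‖ := by
      intro k
      rw [Tpow_kernelVec hl hR hΦ hT _ ha, norm_smul, RCLike.norm_conj,
        kernelVec_norm_eq (hab (nk k)) ((hab (nk k)) ▸ ha)]
    have h2 : Tendsto (fun k => ‖psiProd φ lam (nk k) a‖ * ‖kernelVec a‖) atTop (𝓝 0) := by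
      have h3 : Tendsto (fun k => ‖psiProd φ lam (nk k) a‖) atTop (𝓝 0) := by
        simpa using hΨ.norm
      simpa using h3.mul_const ‖kernelVec a‖
    exact h2.congr (fun k => (heq k).symm)
  | zero => simpa using (tendsto_const_nhds : Tendsto (fun _ : ℕ => (0:H2)) atTop (𝓝 0))
  | add u v hu hv ihu ihv => simpa using ihu.add ihv
  | smul c u hu ihu =>
    have := ihu.const_smul c
    simpa using this

lemma exists_approx {lam : ℂ} (hl : ‖lam‖ = 1) {φ : ℂ → ℂ}
    {R Φ T : H2 →L[ℂ] H2} (hR : IsDilation lam R) (hΦ : IsCoToeplitz φ Φ)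
    (hT : T = R ∘L Φ) {nk : ℕ → ℕ}
    {A : Set ℂ}
    (hA : ∀ b ∈ A, ‖b‖ < 1 ∧ Tendsto (fun k => ‖omegaProd φ lam (nk k) b‖) atTop atTop)
    {y : H2} (hy : y ∈ Submodule.span ℂ (kernelVec '' A)) :
    ∃ w : ℕ → H2, Tendsto w atTop (𝓝 0) ∧
      Tendsto (fun k => (T ^ nk k) (w k)) atTop (𝓝 y) := by
  have hlam0 : lam ≠ 0 := by
    intro h; rw [h] at hl; simp at hl
  have hcl0 : (conj lam : ℂ) ≠ 0 := by simpa using hlam0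
  induction hy using Submodule.span_induction with
  | mem v hv =>
    obtain ⟨b, hbA, rfl⟩ := hv
    obtain ⟨hb, hΩ⟩ := hA b hbA
    have hωb : ∀ m : ℕ, ‖((conj lam : ℂ)⁻¹) ^ m * b‖ = ‖b‖ := by
      intro m
      rw [norm_mul, norm_pow, norm_inv, RCLike.norm_conj, hl, inv_one, one_pow, one_mul]
    refine ⟨fun k => if h : (conj (omegaProd φ lam (nk k) b) : ℂ) = 0 then 0 else
      (conj (omegaProd φ lam (nk k) b))⁻¹ • kernelVec (((conj lam)⁻¹) ^ (nk k) * b),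
      ?_, ?_⟩
    · rw [tendsto_zero_iff_norm_tendsto_zero]
      have hbound : ∀ k, ‖(if h : (conj (omegaProd φ lam (nk k) b) : ℂ) = 0 then (0:H2) else
          (conj (omegaProd φ lam (nk k) b))⁻¹ • kernelVec (((conj lam)⁻¹) ^ (nk k) * b))‖ ≤
          ‖omegaProd φ lam (nk k) b‖⁻¹ * ‖kernelVec b‖ := by
        intro k
        split_ifs with h
        · rw [norm_zero]; positivity
        · rw [norm_smul, norm_inv, RCLike.norm_conj,
            kernelVec_norm_eq (hωb (nk k)) ((hωb (nk k)) ▸ hb)]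
      have hlim : Tendsto (fun k => ‖omegaProd φ lam (nk k) b‖⁻¹ * ‖kernelVec b‖)
          atTop (𝓝 0) := by
        simpa using hΩ.inv_tendsto_atTop.mul_const ‖kernelVec b‖
      exact squeeze_zero (fun k => norm_nonneg _) hbound hlim
    · have hev : ∀ᶠ k in atTop, (T ^ nk k)
          ((if h : (conj (omegaProd φ lam (nk k) b) : ℂ) = 0 then (0:H2) else
          (conj (omegaProd φ lam (nk k) b))⁻¹ • kernelVec (((conj lam)⁻¹) ^ (nk k) * b))) =
          kernelVec b := by
        filter_upwards [hΩ.eventually_ge_atTop 1] with k hk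
        have hne : (omegaProd φ lam (nk k) b : ℂ) ≠ 0 := by
          intro hcon
          rw [hcon] at hk
          simp at hk
          linarith
        have hne' : (conj (omegaProd φ lam (nk k) b) : ℂ) ≠ 0 := by simpa using hne
        rw [dif_neg hne', map_smul,
          Tpow_kernelVec hl hR hΦ hT (nk k) ((hωb (nk k)) ▸ hb),
          psi_omega hcl0, cancel_omega hcl0, smul_smul, inv_mul_cancel₀ hne', one_smul]
      exact Tendsto.congr' (by filter_upwards [hev] with k hk; exact hk.symm)
        tendsto_const_nhds
  | zero =>
    exact ⟨fun _ => 0, tendsto_const_nhds, by simpa using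
      (tendsto_const_nhds : Tendsto (fun _ : ℕ => (0:H2)) atTop (𝓝 0))⟩
  | add u v hu hv ihu ihv =>
    obtain ⟨w1, hw1, hw1'⟩ := ihu
    obtain ⟨w2, hw2, hw2'⟩ := ihv
    refine ⟨fun k => w1 k + w2 k, by simpa using hw1.add hw2, ?_⟩
    have := hw1'.add hw2'
    simpa [map_add] using this
  | smul c u hu ihu =>
    obtain ⟨w, hw, hw'⟩ := ihu
    refine ⟨fun k => c • w k, by simpa using hw.const_smul c, ?_⟩
    have := hw'.const_smul c
    simpa [map_smul] using this

theorem stmt8 (lam : ℂ) (hlam : IsIrrationalRotation lam)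
    (φ : ℂ → ℂ) (hφ : InHinf φ)
    (R Φ T : H2 →L[ℂ] H2) (hR : IsDilation lam R) (hΦ : IsCoToeplitz φ Φ)
    (hT : T = R ∘L Φ)
    (nk : ℕ → ℕ) (hnk : ∀ k, 0 < nk k)
    (hC0 : ∃ p ∈ ball (0:ℂ) 1, AccPt p (Filter.principal
      {z : ℂ | z ∈ ball (0:ℂ) 1 ∧ Tendsto (fun k => psiProd φ lam (nk k) z) atTop (𝓝 0)}))
    (hC1 : ∃ p ∈ ball (0:ℂ) 1, AccPt p (Filter.principal
      {z : ℂ | z ∈ ball (0:ℂ) 1 ∧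
        Tendsto (fun k => ‖omegaProd φ lam (nk k) z‖) atTop atTop})) :
    Hypercyclic T := by
  obtain ⟨hl, -⟩ := hlam
  obtain ⟨p0, hp0, hacc0⟩ := hC0
  obtain ⟨p1, hp1, hacc1⟩ := hC1
  set A0 := {z : ℂ | z ∈ ball (0:ℂ) 1 ∧
    Tendsto (fun k => psiProd φ lam (nk k) z) atTop (𝓝 0)} with hA0
  set A1 := {z : ℂ | z ∈ ball (0:ℂ) 1 ∧
    Tendsto (fun k => ‖omegaProd φ lam (nk k) z‖) atTop atTop} with hA1
  have hd0 : Dense (Submodule.span ℂ (kernelVec '' A0) : Set H2) :=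
    dense_span_kernelVec (fun z hz => hz.1) hp0 hacc0
  have hd1 : Dense (Submodule.span ℂ (kernelVec '' A1) : Set H2) :=
    dense_span_kernelVec (fun z hz => hz.1) hp1 hacc1
  apply hypercyclic_of_transitive
  intro U V hU hV hUne hVne
  obtain ⟨x, hxs, hxU⟩ := hd0.exists_mem_open hU hUne
  obtain ⟨y, hys, hyV⟩ := hd1.exists_mem_open hV hVne
  have hx0 : Tendsto (fun k => (T ^ nk k) x) atTop (𝓝 0) :=
    tendsto_zero_of_span hl hR hΦ hT
      (fun a ha => ⟨mem_ball_zero_iff.mp ha.1, ha.2⟩) hxs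
  obtain ⟨w, hw0, hwy⟩ := exists_approx hl hR hΦ hT
    (fun b hb => ⟨mem_ball_zero_iff.mp hb.1, hb.2⟩) hys
  have h1 : Tendsto (fun k => x + w k) atTop (𝓝 x) := by
    simpa using tendsto_const_nhds.add hw0
  have h2 : Tendsto (fun k => (T ^ nk k) (x + w k)) atTop (𝓝 y) := by
    have h3 := hx0.add hwy
    simp only [zero_add] at h3
    refine h3.congr fun k => ?_
    rw [map_add]
  have e1 : ∀ᶠ k in atTop, x + w k ∈ U := h1.eventually (hU.eventually_mem hxU)
  have e2 : ∀ᶠ k in atTop, (T ^ nk k) (x + w k) ∈ V := h2.eventually (hV.eventually_mem hyV)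
  obtain ⟨k, hk1, hk2⟩ := (e1.and e2).exists
  exact ⟨nk k, x + w k, hk1, hk2⟩
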